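/- Let V be a real topological vector space, T ⊆ V a nonempty convex set, G : T → ℝ a convex function, and {d_t}_{t∈T} a family of linear maps d_t : V → ℝ. Then d_t is a subgradient of G at t for every t ∈ T if and only if {d_t} is a weak local subgradient of G: for every t ∈ T there is an open set U ⊆ V containing t such that for all t' ∈ U ∩ T, both G(t) ≥ G(t') + d_{t'}(t − t') and G(t') ≥ G(t) + d_t(t' − t). -/

import Mathlib

/-- On a convex type space in a real topological vector space, a family of linear maps
is a selection of subgradients of a convex function `G` iff it is a weak local
subgradient of `G`. -/
theorem weak_local_subgradient_iff_subgradient {V : Type*} [AddCommGroup V] [Module ℝ V]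
    [TopologicalSpace V] [IsTopologicalAddGroup V] [ContinuousSMul ℝ V]
    (T : Set V) (hT : T.Nonempty) (hTconv : Convex ℝ T)
    (G : V → ℝ) (hG : ConvexOn ℝ T G) (d : V → (V →ₗ[ℝ] ℝ)) :
    (∀ t ∈ T, ∀ x ∈ T, G t + d t (x - t) ≤ G x) ↔
    (∀ t ∈ T, ∃ U : Set V, IsOpen U ∧ t ∈ U ∧
      ∀ t' ∈ U ∩ T, G t' + d t' (t - t') ≤ G t ∧ G t + d t (t' - t) ≤ G t') := by
  constructor
  · intro h t ht
    exact ⟨Set.univ, isOpen_univ, Set.mem_univ t,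
      fun t' ht' => ⟨h t' ht'.2 t ht, h t ht t' ht'.2⟩⟩
  · intro h t ht x hx
    obtain ⟨U, hUopen, htU, hU⟩ := h t ht
    -- the map s ↦ t + s • (x - t) is continuous
    have hc : Continuous (fun s : ℝ => t + s • (x - t)) :=
      continuous_const.add (continuous_id.smul continuous_const)
    have hopen : IsOpen ((fun s : ℝ => t + s • (x - t)) ⁻¹' U) := hUopen.preimage hc
    have h0 : (0 : ℝ) ∈ (fun s : ℝ => t + s • (x - t)) ⁻¹' U := by
      simp [htU]
    obtain ⟨ε, hε, hball⟩ := Metric.isOpen_iff.mp hopen 0 h0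
    set s : ℝ := min (ε / 2) 1 with hs
    have hs0 : 0 < s := lt_min (by linarith) one_pos
    have hs1 : s ≤ 1 := min_le_right _ _
    have hsmem : t + s • (x - t) ∈ U := by
      apply hball
      simp only [Metric.mem_ball, Real.dist_eq, sub_zero]
      rw [abs_of_pos hs0]
      exact lt_of_le_of_lt (min_le_left _ _) (by linarith)
    set t' : V := t + s • (x - t) with ht'
    have hcomb : t' = (1 - s) • t + s • x := by
      rw [ht', smul_sub, sub_smul, one_smul]; abel
    have ht'T : t' ∈ T := by
      rw [hcomb]
      exact hTconv ht hx (by linarith) (le_of_lt hs0) (by ring)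
    have hGt' : G t' ≤ (1 - s) * G t + s * G x := by
      rw [hcomb]
      exact hG.2 ht hx (by linarith) (le_of_lt hs0) (by ring)
    have hlocal := (hU t' ⟨hsmem, ht'T⟩).2
    have hdiff : t' - t = s • (x - t) := by rw [ht']; abel
    rw [hdiff, map_smul, smul_eq_mul] at hlocal
    -- hlocal : G t + s * d t (x - t) ≤ G t'
    have key : s * (d t (x - t)) ≤ s * (G x - G t) := by nlinarith
    have := (mul_le_mul_iff_right₀ hs0).mp key
    linarith
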